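/- In B(Q_∞), for any element of the form (1, b, c, e), its p-th power equals (1, 0, c', e^p) for some c' ∈ 𝔽_{q²}, and consequently its p²-th power equals (1, 0, 0, e^{p²}). -/

import Mathlib

def hermMul (q : ℕ) {F : Type} [Field F] (s t : F × F × F) : F × F × F :=
  (s.1 * t.1, t.1 * s.2.1 + t.2.1,
    t.1 ^ (q + 1) * s.2.2 + t.1 * t.2.1 ^ q * s.2.1 + t.2.2)

def hermSet (q : ℕ) (F : Type) [Field F] : Set (F × F × F) :=
  {s | s.1 ≠ 0 ∧ s.2.2 ^ q + s.2.2 = s.2.1 ^ (q + 1)}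

def ggkMul (q : ℕ) {F E : Type} [Field F] [Field E] (s t : F × F × F × E) :
    F × F × F × E :=
  (s.1 * t.1, t.1 * s.2.1 + t.2.1,
    t.1 ^ (q + 1) * s.2.2.1 + t.1 * t.2.1 ^ q * s.2.1 + t.2.2.1,
    s.2.2.2 * t.2.2.2)

def ggkSet (q m : ℕ) {F E : Type} [Field F] [Field E] (ι : F →+* E) :
    Set (F × F × F × E) :=
  {s | s.1 ≠ 0 ∧ s.2.2.1 ^ q + s.2.2.1 = s.2.1 ^ (q + 1) ∧ s.2.2.2 ^ m = ι s.1}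

/-- restriction to the Hermitian coordinates: `(a,b,c,d) ↦ (a,b,c)`. -/
def projA {q m : ℕ} {F E : Type} [Field F] [Field E] {ι : F →+* E}
    (x : ggkSet q m ι) : F × F × F :=
  (x.val.1, x.val.2.1, x.val.2.2.1)

/-- the map `π_d : (a,b,c,d) ↦ d`. -/
def projD {q m : ℕ} {F E : Type} [Field F] [Field E] {ι : F →+* E}
    (x : ggkSet q m ι) : E :=
  x.val.2.2.2

/-- the map `π_a : (a,b,c,d) ↦ a`. -/
def projA0 {q m : ℕ} {F E : Type} [Field F] [Field E] {ι : F →+* E}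
    (x : ggkSet q m ι) : F :=
  x.val.1

theorem stmt15 (p h q n m : ℕ) (hp : p.Prime) (hh : 0 < h) (hq : q = p ^ h)
    (hn : Odd n) (hn1 : 1 ≤ n) (hm : m * (q + 1) = q ^ n + 1)
    (F E : Type) [Field F] [Fintype F] [CharP F p] [Field E] [Fintype E] [CharP E p]
    (hF : Fintype.card F = q ^ 2) (hE : Fintype.card E = q ^ (2 * n)) (ι : F →+* E)
    [instB : Group (ggkSet q m ι)]
    (hmulB : ∀ s t : ggkSet q m ι, (s * t).val = ggkMul q s.val t.val)
    (g : ↥(ggkSet q m ι)) (hg : projA0 g = 1) :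
    (∃ c' : F, (g ^ p).val = ((1 : F), (0 : F), c', projD g ^ p)) ∧
      (g ^ (p ^ 2)).val = ((1 : F), (0 : F), (0 : F), projD g ^ (p ^ 2)) := by
  have hg1 : g.val.1 = 1 := hg
  have key : ∀ k : ℕ, (g ^ (k + 1)).val.1 = 1 ∧
      (g ^ (k + 1)).val.2.1 = ((k + 1 : ℕ) : F) * g.val.2.1 ∧
      (g ^ (k + 1)).val.2.2.2 = projD g ^ (k + 1) := by
    intro k
    induction k with
    | zero => simp [pow_one, projD, hg1]
    | succ k ih =>
      obtain ⟨ih1, ih2, ih3⟩ := ih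
      have : g ^ (k + 1 + 1) = g ^ (k + 1) * g := pow_succ g (k + 1)
      rw [this, hmulB]
      simp only [ggkMul, hg1, ih1, ih2, ih3]
      refine ⟨by ring, ?_, by rw [show (g : F × F × F × E).2.2.2 = projD g from rfl, ← pow_succ]⟩
      push_cast
      ring
  have hppos : 1 ≤ p := hp.one_lt.le.trans' (by norm_num)
  obtain ⟨k, hk⟩ : ∃ k, p = k + 1 := ⟨p - 1, (Nat.succ_pred_eq_of_pos hp.pos).symm⟩
  have hpF : ((p : ℕ) : F) = 0 := CharP.cast_eq_zero F p
  have k1 : (g ^ p).val.1 = 1 := by rw [hk]; exact (key k).1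
  have k2 : (g ^ p).val.2.1 = 0 := by
    rw [hk, (key k).2.1, ← hk, hpF, zero_mul]
  have k3 : (g ^ p).val.2.2.2 = projD g ^ p := by rw [hk]; exact (key k).2.2
  set G := g ^ p with hG
  have key2 : ∀ k : ℕ, (G ^ (k + 1)).val.1 = 1 ∧
      (G ^ (k + 1)).val.2.1 = 0 ∧
      (G ^ (k + 1)).val.2.2.1 = ((k + 1 : ℕ) : F) * G.val.2.2.1 ∧
      (G ^ (k + 1)).val.2.2.2 = G.val.2.2.2 ^ (k + 1) := by
    intro j
    induction j with
    | zero => simp [k1, k2]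
    | succ j ih =>
      obtain ⟨ih1, ih2, ih3, ih4⟩ := ih
      have : G ^ (j + 1 + 1) = G ^ (j + 1) * G := pow_succ G (j + 1)
      rw [this, hmulB]
      simp only [ggkMul, k1, k2, ih1, ih2, ih3, ih4]
      refine ⟨by ring, by ring, ?_, by rw [← pow_succ]⟩
      push_cast
      ring
  constructor
  · refine ⟨(g ^ p).val.2.2.1, ?_⟩
    ext <;> simp [k1, k2, k3] <;> rfl
  · have hsq : g ^ (p ^ 2) = G ^ p := by rw [hG, ← pow_mul, pow_two]
    have m1 := (key2 k).1
    have m2 := (key2 k).2.1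
    have m3 := (key2 k).2.2.1
    have m4 := (key2 k).2.2.2
    rw [← hk] at m1 m2 m3 m4
    rw [hpF, zero_mul] at m3
    rw [k3] at m4
    rw [hsq]
    ext
    · exact m1
    · exact m2
    · exact m3
    · rw [m4, ← pow_mul, ← pow_two]
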